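/- Let p ∈ (0,1), let K be a p-core CRG, and let x be a nonnegative weight vector summing to 1 attaining the minimum g_K(p). If p ≤ 1/2, then x(v) ≤ g_K(p)/(1−p) for every black vertex v. If p ≥ 1/2, then x(v) ≤ g_K(p)/p for every white vertex v. -/
import Mathlib


/-- Colors for edges of a colored regularity graph. -/
inductive EColor : Type
  | white
  | gray
  | black
deriving DecidableEq

/-- A colored regularity graph (CRG) on a finite vertex type `V`: each vertex is
white or black (`vWhite v = true` means white), and each pair of distinct vertices
gets a symmetric edge color (white, gray or black). -/
structure CRG (V : Type) [Fintype V] where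
  vWhite : V → Bool
  ecolor : V → V → EColor
  ecolor_symm : ∀ u v, ecolor u v = ecolor v u

namespace CRG

variable {V : Type} [Fintype V] [DecidableEq V]

/-- The matrix `M_K(p)`. -/
noncomputable def M (K : CRG V) (p : ℝ) (u v : V) : ℝ :=
  if u = v then (if K.vWhite u then p else 1 - p)
  else
    match K.ecolor u v with
    | EColor.white => p
    | EColor.black => 1 - p
    | EColor.gray => 0

/-- The function `g_K(p)`: the minimum of `xᵀ M_K(p) x` over nonnegative weight
vectors summing to `1`. -/
noncomputable def g (K : CRG V) (p : ℝ) : ℝ :=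
  sInf {r : ℝ | ∃ x : V → ℝ, (∀ v, 0 ≤ x v) ∧ (∑ v, x v) = 1 ∧
    r = ∑ u, ∑ v, x u * K.M p u v * x v}

/-- The sub-CRG induced on a subset `s` of the vertices. -/
def sub (K : CRG V) (s : Finset V) : CRG {v // v ∈ s} where
  vWhite := fun v => K.vWhite v.1
  ecolor := fun u v => K.ecolor u.1 v.1
  ecolor_symm := fun u v => K.ecolor_symm u.1 v.1

/-- `K` is `p`-core if `g_K(p) < g_{K'}(p)` for every proper (nonempty) sub-CRG `K'`. -/
def IsPCore (K : CRG V) (p : ℝ) : Prop :=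
  ∀ s : Finset V, s.Nonempty → s ≠ Finset.univ → K.g p < (K.sub s).g p

/-- `x` is an optimal weight vector for `K` at `p`. -/
def IsOptWeight (K : CRG V) (p : ℝ) (x : V → ℝ) : Prop :=
  (∀ v, 0 ≤ x v) ∧ (∑ v, x v) = 1 ∧
    (∑ u, ∑ v, x u * K.M p u v * x v) = K.g p

/-- The gray degree `d_G(v)`: total weight of gray neighbors of `v`. -/
noncomputable def dG (K : CRG V) (x : V → ℝ) (v : V) : ℝ :=
  ∑ w ∈ Finset.univ.filter fun w => w ≠ v ∧ K.ecolor v w = EColor.gray, x w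

/-- The white degree `d_W(v)`: total weight of white neighbors of `v`, including `v`
itself if `v` is white. -/
noncomputable def dW (K : CRG V) (x : V → ℝ) (v : V) : ℝ :=
  (∑ w ∈ Finset.univ.filter fun w => w ≠ v ∧ K.ecolor v w = EColor.white, x w) +
    (if K.vWhite v then x v else 0)

/-- The black degree `d_B(v)`: total weight of black neighbors of `v`, including `v`
itself if `v` is black. -/
noncomputable def dB (K : CRG V) (x : V → ℝ) (v : V) : ℝ :=
  (∑ w ∈ Finset.univ.filter fun w => w ≠ v ∧ K.ecolor v w = EColor.black, x w) +
    (if K.vWhite v then 0 else x v)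

/-- The number of gray neighbors of `v`. -/
def grayDeg (K : CRG V) (v : V) : ℕ :=
  (Finset.univ.filter fun w => w ≠ v ∧ K.ecolor v w = EColor.gray).card

end CRG

/-- A graph `H` embeds in a CRG `K`, written `H ↦ K`. -/
def EmbedsIn {α : Type*} {V : Type} [Fintype V] (H : SimpleGraph α) (K : CRG V) : Prop :=
  ∃ φ : α → V,
    (∀ a b : α, H.Adj a b →
      (φ a = φ b ∧ K.vWhite (φ a) = false) ∨
      (φ a ≠ φ b ∧ (K.ecolor (φ a) (φ b) = EColor.black ∨ K.ecolor (φ a) (φ b) = EColor.gray))) ∧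
    (∀ a b : α, a ≠ b → ¬H.Adj a b →
      (φ a = φ b ∧ K.vWhite (φ a) = true) ∨
      (φ a ≠ φ b ∧ (K.ecolor (φ a) (φ b) = EColor.white ∨ K.ecolor (φ a) (φ b) = EColor.gray)))

open Finset

lemma myM_nonneg {V : Type} [Fintype V] [DecidableEq V] (K : CRG V) {p : ℝ}
    (h0 : 0 ≤ p) (h1 : p ≤ 1) (u v : V) : 0 ≤ K.M p u v := by
  unfold CRG.M
  by_cases h : u = v
  · simp only [h, if_pos rfl]
    split_ifs <;> linarith
  · simp only [h, if_neg h]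
    rcases hc : K.ecolor u v <;> simp [hc] <;> linarith

lemma myM_symm {V : Type} [Fintype V] [DecidableEq V] (K : CRG V) (p : ℝ) (u v : V) :
    K.M p u v = K.M p v u := by
  by_cases h : u = v
  · simp [CRG.M, h]
  · have h' : ¬ v = u := fun e => h e.symm
    rw [CRG.M, CRG.M, if_neg h, if_neg h', K.ecolor_symm u v]

lemma myg_le {V : Type} [Fintype V] [DecidableEq V] (K : CRG V) {p : ℝ}
    (h0 : 0 ≤ p) (h1 : p ≤ 1)
    (y : V → ℝ) (hy0 : ∀ v, 0 ≤ y v) (hy1 : (∑ v, y v) = 1) :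
    K.g p ≤ ∑ u, ∑ v, y u * K.M p u v * y v := by
  apply csInf_le
  · refine ⟨0, fun r hr => ?_⟩
    obtain ⟨z, hz0, hz1, rfl⟩ := hr
    apply Finset.sum_nonneg; intro u _
    apply Finset.sum_nonneg; intro w _
    exact mul_nonneg (mul_nonneg (hz0 u) (myM_nonneg K h0 h1 u w)) (hz0 w)
  · exact ⟨y, hy0, hy1, rfl⟩

lemma aux_small (a b c δ : ℝ) (hδ : 0 < δ) (h : ∀ t, 0 < t → t ≤ δ → a ≤ b + t * c) :
    a ≤ b := by
  by_contra hab
  push_neg at hab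
  have hc : 0 < c := by nlinarith [h δ hδ le_rfl]
  have hε : (a - b) / (2 * c) * (2 * c) = a - b := div_mul_cancel₀ _ (by positivity)
  have ht0 : 0 < min δ ((a - b) / (2 * c)) := lt_min hδ (div_pos (by linarith) (by positivity))
  have h1 := h _ ht0 (min_le_left _ _)
  have h2 : min δ ((a - b) / (2 * c)) ≤ (a - b) / (2 * c) := min_le_right _ _
  nlinarith [mul_le_mul_of_nonneg_right h2 (le_of_lt hc)]

lemma key_bound {V : Type} [Fintype V] [DecidableEq V] (K : CRG V) {p : ℝ}
    (h0 : 0 ≤ p) (h1 : p ≤ 1) (x : V → ℝ)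
    (hx0 : ∀ v, 0 ≤ x v) (hx1 : (∑ v, x v) = 1)
    (hxval : (∑ u, ∑ v, x u * K.M p u v * x v) = K.g p) (v : V) :
    K.M p v v * x v ≤ K.g p := by
  have hg0 : 0 ≤ K.g p := by
    rw [← hxval]
    apply Finset.sum_nonneg; intro u _; apply Finset.sum_nonneg; intro w _
    exact mul_nonneg (mul_nonneg (hx0 u) (myM_nonneg K h0 h1 u w)) (hx0 w)
  rcases eq_or_lt_of_le (hx0 v) with hv | hv
  · rw [← hv, mul_zero]; exact hg0
  set S := ∑ w, K.M p v w * x w with hS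
  have hxv1 : x v ≤ 1 := by
    rw [← hx1]
    exact Finset.single_le_sum (fun w _ => hx0 w) (Finset.mem_univ v)
  have hMS : K.M p v v * x v ≤ S :=
    Finset.single_le_sum (fun w _ => mul_nonneg (myM_nonneg K h0 h1 v w) (hx0 w))
      (Finset.mem_univ v)
  have hSg : S ≤ K.g p := by
    apply aux_small S (K.g p) ((K.M p v v - K.g p) / 2) (x v / 2) (by linarith)
    intro t ht0 htd
    have ht1 : t < 1 := by linarith
    have htc : (0:ℝ) < 1 - t := by linarith
    set y : V → ℝ := fun w => (x w - if w = v then t else 0) / (1 - t) with hy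
    have hy0 : ∀ w, 0 ≤ y w := by
      intro w
      apply div_nonneg _ (le_of_lt htc)
      by_cases hw : w = v
      · subst hw; simp; linarith
      · simp [hw]; exact hx0 w
    have hy1 : (∑ w, y w) = 1 := by
      simp only [hy]
      rw [← Finset.sum_div, Finset.sum_sub_distrib, hx1, Finset.sum_ite_eq' Finset.univ v]
      simp [htc.ne']
    have hgle := myg_le K h0 h1 y hy0 hy1
    have hnum : (∑ u, ∑ w, (x u - if u = v then t else 0) * K.M p u w
          * (x w - if w = v then t else 0))
        = K.g p - 2 * t * S + t ^ 2 * K.M p v v := by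
      have hinner : ∀ u : V, (∑ w, (x u - if u = v then t else 0) * K.M p u w
            * (x w - if w = v then t else 0))
          = (x u - if u = v then t else 0) * ((∑ w, K.M p u w * x w) - K.M p u v * t) := by
        intro u
        have step : ∀ w : V, (x u - if u = v then t else 0) * K.M p u w
              * (x w - if w = v then t else 0)
            = (x u - if u = v then t else 0) * (K.M p u w * x w)
              - (if w = v then (x u - if u = v then t else 0) * (K.M p u v * t) else 0) := by
          intro w; by_cases hw : w = v
          · subst hw; simp only [if_pos rfl, if_true]; ring
          · simp only [hw, if_false]; ring
        rw [Finset.sum_congr rfl fun w _ => step w, Finset.sum_sub_distrib, ← Finset.mul_sum,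
          Finset.sum_ite_eq' Finset.univ v, if_pos (Finset.mem_univ v), mul_sub]
      rw [Finset.sum_congr rfl fun u _ => hinner u]
      have step2 : ∀ u : V, (x u - if u = v then t else 0)
            * ((∑ w, K.M p u w * x w) - K.M p u v * t)
          = (x u * (∑ w, K.M p u w * x w) - x u * (K.M p u v * t))
            - (if u = v then t * ((∑ w, K.M p v w * x w) - K.M p v v * t) else 0) := by
        intro u; by_cases hu : u = v
        · subst hu; simp only [if_pos rfl, if_true]; ring
        · simp only [hu, if_false]; ring
      rw [Finset.sum_congr rfl fun u _ => step2 u, Finset.sum_sub_distrib,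
        Finset.sum_sub_distrib, Finset.sum_ite_eq' Finset.univ v, if_pos (Finset.mem_univ v)]
      have e1 : (∑ u, x u * (∑ w, K.M p u w * x w)) = K.g p := by
        rw [← hxval]
        refine Finset.sum_congr rfl fun u _ => ?_
        rw [Finset.mul_sum]
        exact Finset.sum_congr rfl fun w _ => by ring
      have e2 : (∑ u, x u * (K.M p u v * t)) = t * S := by
        rw [hS, Finset.mul_sum]
        refine Finset.sum_congr rfl fun u _ => ?_
        rw [myM_symm K p v u]; ring
      rw [e1, e2, ← hS]
      ring
    have hcomp : (∑ u, ∑ w, y u * K.M p u w * y w)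
        = (K.g p - 2 * t * S + t ^ 2 * K.M p v v) / (1 - t) ^ 2 := by
      rw [← hnum]
      simp only [hy]
      rw [Finset.sum_congr rfl (fun u (_ : u ∈ Finset.univ) => show
        (∑ w, (x u - if u = v then t else 0) / (1 - t) * K.M p u w
            * ((x w - if w = v then t else 0) / (1 - t)))
        = (∑ w, (x u - if u = v then t else 0) * K.M p u w
            * (x w - if w = v then t else 0)) / (1 - t) ^ 2 from by
        rw [Finset.sum_div]
        exact Finset.sum_congr rfl (fun w _ => by rw [div_mul_eq_mul_div, div_mul_div_comm, ← sq]))]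
      rw [← Finset.sum_div]
    rw [hcomp, le_div_iff₀ (by positivity)] at hgle
    nlinarith [hgle, ht0]
  linarith

theorem pcore_weight_bound {V : Type} [Fintype V] [DecidableEq V] [Nonempty V]
    (p : ℝ) (hp : p ∈ Set.Ioo (0 : ℝ) 1) (K : CRG V) (hcore : K.IsPCore p)
    (x : V → ℝ) (hx : K.IsOptWeight p x) :
    (p ≤ 1 / 2 → ∀ v : V, K.vWhite v = false → x v ≤ K.g p / (1 - p)) ∧
    (1 / 2 ≤ p → ∀ v : V, K.vWhite v = true → x v ≤ K.g p / p) := by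
  obtain ⟨hx0, hx1, hxval⟩ := hx
  obtain ⟨hp0, hp1⟩ := hp
  constructor
  · intro hp2 v hv
    have hM : K.M p v v = 1 - p := by simp [CRG.M, hv]
    have hkey := key_bound K hp0.le hp1.le x hx0 hx1 hxval v
    rw [hM] at hkey
    exact (le_div_iff₀ (by linarith : (0:ℝ) < 1 - p)).mpr (by linarith)
  · intro hp2 v hv
    have hM : K.M p v v = p := by simp [CRG.M, hv]
    have hkey := key_bound K hp0.le hp1.le x hx0 hx1 hxval v
    rw [hM] at hkey
    exact (le_div_iff₀ hp0).mpr (by linarith)
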